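/- Let S be a specification IOVPTS and I an implementation IOVPTS over the same alphabet L = L_I ∪ L_U. Then I ioco-like-conforms to S if and only if otr(I) ∩ T = ∅, where T = (L* − otr(S)) ∩ (otr(S)·L_U). -/
import Mathlib


inductive VPKind : Type where
  | call : VPKind
  | ret : VPKind
  | intern : VPKind

/-- A visibly pushdown automaton over an alphabet `A` partitioned by `kind` into
call (push), return (pop) and simple (internal) symbols.  The stack bottom `⊥` is
implicit: a stack is a `List Stack`, the empty list meaning the stack contains only `⊥`.
`intT` transitions labelled by `none` are ε-transitions. -/
structure VPA (A : Type) (kind : A → VPKind) where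
  State : Type
  Stack : Type
  fintypeState : Fintype State
  init : Set State
  final : Set State
  pushT : Set (State × A × Stack × State)
  popT : Set (State × A × Option Stack × State)
  intT : Set (State × Option A × State)
  push_call : ∀ p a Z q, (p, a, Z, q) ∈ pushT → kind a = VPKind.call
  pop_ret : ∀ p a Z q, (p, a, Z, q) ∈ popT → kind a = VPKind.ret
  int_simple : ∀ p a q, (p, some a, q) ∈ intT → kind a = VPKind.intern

attribute [instance] VPA.fintypeState

namespace VPA

variable {A : Type} {kind : A → VPKind}

abbrev Conf (M : VPA A kind) : Type := M.State × List A × List M.Stack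

inductive Step (M : VPA A kind) : M.Conf → M.Conf → Prop where
  | push {p q : M.State} {a : A} {Z : M.Stack} {σ : List A} {α : List M.Stack} :
      (p, a, Z, q) ∈ M.pushT → Step M (p, a :: σ, α) (q, σ, Z :: α)
  | pop {p q : M.State} {a : A} {Z : M.Stack} {σ : List A} {α : List M.Stack} :
      (p, a, some Z, q) ∈ M.popT → Step M (p, a :: σ, Z :: α) (q, σ, α)
  | popEmpty {p q : M.State} {a : A} {σ : List A} :
      (p, a, none, q) ∈ M.popT → Step M (p, a :: σ, []) (q, σ, [])
  | int {p q : M.State} {a : A} {σ : List A} {α : List M.Stack} :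
      (p, some a, q) ∈ M.intT → Step M (p, a :: σ, α) (q, σ, α)
  | eps {p q : M.State} {σ : List A} {α : List M.Stack} :
      (p, none, q) ∈ M.intT → Step M (p, σ, α) (q, σ, α)

/-- Reflexive-transitive closure `↦*` of the one-step move relation. -/
def Steps (M : VPA A kind) : M.Conf → M.Conf → Prop := Relation.ReflTransGen M.Step

/-- `n`-th power `↦ⁿ` of the one-step move relation. -/
def StepN (M : VPA A kind) : ℕ → M.Conf → M.Conf → Prop
  | 0 => fun c c' => c = c'
  | n + 1 => fun c c' => ∃ d, M.Step c d ∧ StepN M n d c'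

def Lang (M : VPA A kind) : Set (List A) :=
  { σ | ∃ s₀ ∈ M.init, ∃ p ∈ M.final, ∃ β, M.Steps (s₀, σ, []) (p, [], β) }

def NoEps (M : VPA A kind) : Prop := ∀ p q, (p, none, q) ∉ M.intT

def Deterministic (M : VPA A kind) : Prop :=
  M.init.Subsingleton ∧
  (∀ p a Z₁ q₁ Z₂ q₂, (p, a, Z₁, q₁) ∈ M.pushT → (p, a, Z₂, q₂) ∈ M.pushT →
      Z₁ = Z₂ ∧ q₁ = q₂) ∧
  (∀ p a Z q₁ q₂, (p, a, Z, q₁) ∈ M.popT → (p, a, Z, q₂) ∈ M.popT → q₁ = q₂) ∧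
  (∀ p a q₁ q₂, (p, a, q₁) ∈ M.intT → (p, a, q₂) ∈ M.intT → q₁ = q₂) ∧
  (∀ p q',
    ((∃ a Z q, (p, a, Z, q) ∈ M.pushT) ∨ (∃ a Z q, (p, a, Z, q) ∈ M.popT) ∨
      (∃ a q, (p, some a, q) ∈ M.intT)) → (p, none, q') ∉ M.intT)

def NonBlocking (M : VPA A kind) : Prop :=
  ∀ (s : M.State) (σ : List A) (α : List M.Stack), ∃ p β, M.Steps (s, σ, α) (p, [], β)

/-- The synchronous product of two VPAs over a common alphabet. -/
def prod (M N : VPA A kind) : VPA A kind where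
  State := M.State × N.State
  Stack := M.Stack × N.Stack
  fintypeState := inferInstance
  init := M.init ×ˢ N.init
  final := M.final ×ˢ N.final
  pushT := { t | (t.1.1, t.2.1, t.2.2.1.1, t.2.2.2.1) ∈ M.pushT ∧
                 (t.1.2, t.2.1, t.2.2.1.2, t.2.2.2.2) ∈ N.pushT }
  popT := { t |
      match t.2.2.1 with
      | some Z => (t.1.1, t.2.1, some Z.1, t.2.2.2.1) ∈ M.popT ∧
                  (t.1.2, t.2.1, some Z.2, t.2.2.2.2) ∈ N.popT
      | none => (t.1.1, t.2.1, (none : Option M.Stack), t.2.2.2.1) ∈ M.popT ∧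
                (t.1.2, t.2.1, (none : Option N.Stack), t.2.2.2.2) ∈ N.popT }
  intT := { t |
      match t.2.1 with
      | some a => (t.1.1, some a, t.2.2.1) ∈ M.intT ∧ (t.1.2, some a, t.2.2.2) ∈ N.intT
      | none => (t.1.1 = t.2.2.1 ∧ (t.1.2, none, t.2.2.2) ∈ N.intT) ∨
                (t.1.2 = t.2.2.2 ∧ (t.1.1, none, t.2.2.1) ∈ M.intT) }
  push_call := fun _ _ _ _ h => M.push_call _ _ _ _ h.1
  pop_ret := by
    intro p a Z q h
    cases Z with
    | some Z => exact M.pop_ret _ _ _ _ h.1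
    | none => exact M.pop_ret _ _ _ _ h.1
  int_simple := fun _ _ _ h => M.int_simple _ _ _ h.1

end VPA

/-- A visibly pushdown transition system over an alphabet `L` partitioned by `kind`.
`intT` transitions labelled by `none` are silent `ς`-transitions. -/
structure VPTS (L : Type) (kind : L → VPKind) where
  State : Type
  Stack : Type
  fintypeState : Fintype State
  init : Set State
  pushT : Set (State × L × Stack × State)
  popT : Set (State × L × Option Stack × State)
  intT : Set (State × Option L × State)
  push_call : ∀ p a Z q, (p, a, Z, q) ∈ pushT → kind a = VPKind.call
  pop_ret : ∀ p a Z q, (p, a, Z, q) ∈ popT → kind a = VPKind.ret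
  int_simple : ∀ p a q, (p, some a, q) ∈ intT → kind a = VPKind.intern

attribute [instance] VPTS.fintypeState

namespace VPTS

variable {L : Type} {kind : L → VPKind}

abbrev Conf (M : VPTS L kind) : Type := M.State × List M.Stack

/-- `M.Obs c σ c'` means `c ⇒^σ c'`: there is a sequence of one-step moves from `c`
to `c'` whose sequence of non-silent labels is `σ`. -/
inductive Obs (M : VPTS L kind) : M.Conf → List L → M.Conf → Prop where
  | refl (c : M.Conf) : Obs M c [] c
  | push {p q : M.State} {a : L} {Z : M.Stack} {α : List M.Stack} {σ : List L} {c : M.Conf} :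
      (p, a, Z, q) ∈ M.pushT → Obs M (q, Z :: α) σ c → Obs M (p, α) (a :: σ) c
  | pop {p q : M.State} {a : L} {Z : M.Stack} {α : List M.Stack} {σ : List L} {c : M.Conf} :
      (p, a, some Z, q) ∈ M.popT → Obs M (q, α) σ c → Obs M (p, Z :: α) (a :: σ) c
  | popEmpty {p q : M.State} {a : L} {σ : List L} {c : M.Conf} :
      (p, a, none, q) ∈ M.popT → Obs M (q, []) σ c → Obs M (p, []) (a :: σ) c
  | int {p q : M.State} {a : L} {α : List M.Stack} {σ : List L} {c : M.Conf} :
      (p, some a, q) ∈ M.intT → Obs M (q, α) σ c → Obs M (p, α) (a :: σ) c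
  | silent {p q : M.State} {α : List M.Stack} {σ : List L} {c : M.Conf} :
      (p, none, q) ∈ M.intT → Obs M (q, α) σ c → Obs M (p, α) σ c

/-- The observable traces of `M`. -/
def otr (M : VPTS L kind) : Set (List L) :=
  { σ | ∃ s₀ ∈ M.init, ∃ c, M.Obs (s₀, []) σ c }

/-- `I` (D,F)-visibly conforms to `S`. -/
def VConf (I S : VPTS L kind) (D F : Set (List L)) : Prop :=
  (∀ σ ∈ I.otr ∩ F, σ ∉ S.otr) ∧ (∀ σ ∈ I.otr ∩ D, σ ∈ S.otr)

def after (M : VPTS L kind) (c : M.Conf) (σ : List L) : Set M.Conf :=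
  { c' | M.Obs c σ c' }

/-- The output symbols (members of `LU`) enabled at some configuration of `C`. -/
def outSet (M : VPTS L kind) (LU : Set L) (C : Set M.Conf) : Set L :=
  { ℓ | ℓ ∈ LU ∧ ∃ c ∈ C, ∃ c', M.Obs c [ℓ] c' }

/-- `I` ioco-like conforms to `S`, with output alphabet `LU`. -/
def Ioco (LU : Set L) (I S : VPTS L kind) : Prop :=
  ∀ σ ∈ S.otr, ∀ q₀ ∈ I.init, ∀ ℓ ∈ I.outSet LU (I.after (q₀, []) σ),
    ∃ s₀ ∈ S.init, ℓ ∈ S.outSet LU (S.after (s₀, []) σ)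

/-- A VPTS is deterministic: at most one initial state and each observable trace
reaches a unique configuration. -/
def Deterministic (M : VPTS L kind) : Prop :=
  M.init.Subsingleton ∧
  ∀ (σ : List L), ∀ s₀ ∈ M.init, ∀ s₀' ∈ M.init, ∀ c c',
    M.Obs (s₀, []) σ c → M.Obs (s₀', []) σ c' → c = c'

/-- The cross product of two VPTSs over a common alphabet: observable moves
synchronize, silent moves interleave. -/
def prod (M N : VPTS L kind) : VPTS L kind where
  State := M.State × N.State
  Stack := M.Stack × N.Stack
  fintypeState := inferInstance
  init := M.init ×ˢ N.init
  pushT := { t | (t.1.1, t.2.1, t.2.2.1.1, t.2.2.2.1) ∈ M.pushT ∧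
                 (t.1.2, t.2.1, t.2.2.1.2, t.2.2.2.2) ∈ N.pushT }
  popT := { t |
      match t.2.2.1 with
      | some Z => (t.1.1, t.2.1, some Z.1, t.2.2.2.1) ∈ M.popT ∧
                  (t.1.2, t.2.1, some Z.2, t.2.2.2.2) ∈ N.popT
      | none => (t.1.1, t.2.1, (none : Option M.Stack), t.2.2.2.1) ∈ M.popT ∧
                (t.1.2, t.2.1, (none : Option N.Stack), t.2.2.2.2) ∈ N.popT }
  intT := { t |
      match t.2.1 with
      | some a => (t.1.1, some a, t.2.2.1) ∈ M.intT ∧ (t.1.2, some a, t.2.2.2) ∈ N.intT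
      | none => (t.1.1 = t.2.2.1 ∧ (t.1.2, none, t.2.2.2) ∈ N.intT) ∨
                (t.1.2 = t.2.2.2 ∧ (t.1.1, none, t.2.2.1) ∈ M.intT) }
  push_call := fun _ _ _ _ h => M.push_call _ _ _ _ h.1
  pop_ret := by
    intro p a Z q h
    cases Z with
    | some Z => exact M.pop_ret _ _ _ _ h.1
    | none => exact M.pop_ret _ _ _ _ h.1
  int_simple := fun _ _ _ h => M.int_simple _ _ _ h.1

/-- `I` passes the fault model `(T, fail)`: no run of the cross product reaches
the `fail` state of `T`. -/
def Passes (T : VPTS L kind) (fail : T.State) (I : VPTS L kind) : Prop :=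
  ∀ (σ : List L), ∀ t₀ ∈ T.init, ∀ q₀ ∈ I.init, ∀ (q : I.State)
    (α : List (T.Stack × I.Stack)),
    ¬ (T.prod I).Obs ((t₀, q₀), []) σ ((fail, q), α)

/-- `Q` adheres to the test suite `T`. -/
def Adheres (Q : VPTS L kind) (T : Set (List L)) : Prop := Q.otr ∩ T = ∅

/-- `T` is a complete (sound and exhaustive) test suite for `S` and `(D,F)`. -/
def CompleteSuite (S : VPTS L kind) (D F : Set (List L)) (T : Set (List L)) : Prop :=
  ∀ I : VPTS L kind, (Adheres I T ↔ VConf I S D F)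

/-- The concatenation `otr(S)·LU`. -/
def otrConcat (S : VPTS L kind) (LU : Set L) : Set (List L) :=
  { w | ∃ σ ∈ S.otr, ∃ ℓ ∈ LU, w = σ ++ [ℓ] }

lemma obs_trans {M : VPTS L kind} {c c' c'' : M.Conf} {σ τ : List L}
    (h1 : M.Obs c σ c') (h2 : M.Obs c' τ c'') : M.Obs c (σ ++ τ) c'' := by
  induction h1 with
  | refl => exact h2
  | push h _ ih => exact Obs.push h (ih h2)
  | pop h _ ih => exact Obs.pop h (ih h2)
  | popEmpty h _ ih => exact Obs.popEmpty h (ih h2)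
  | int h _ ih => exact Obs.int h (ih h2)
  | silent h _ ih => exact Obs.silent h (ih h2)

lemma obs_split {M : VPTS L kind} {c c'' : M.Conf} {ρ : List L}
    (h : M.Obs c ρ c'') : ∀ σ τ : List L, ρ = σ ++ τ →
    ∃ c', M.Obs c σ c' ∧ M.Obs c' τ c'' := by
  induction h with
  | refl d =>
    intro σ τ hστ
    obtain ⟨hσ, hτ⟩ := List.append_eq_nil_iff.mp hστ.symm
    subst hσ; subst hτ
    exact ⟨d, Obs.refl d, Obs.refl d⟩
  | push h htail ih =>
    intro σ τ hστ
    cases σ with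
    | nil =>
      simp only [List.nil_append] at hστ
      subst hστ
      exact ⟨_, Obs.refl _, Obs.push h htail⟩
    | cons b σ₁ =>
      simp only [List.cons_append, List.cons.injEq] at hστ
      obtain ⟨rfl, h2⟩ := hστ
      obtain ⟨c', hc1, hc2⟩ := ih σ₁ τ h2
      exact ⟨c', Obs.push h hc1, hc2⟩
  | pop h htail ih =>
    intro σ τ hστ
    cases σ with
    | nil =>
      simp only [List.nil_append] at hστ
      subst hστ
      exact ⟨_, Obs.refl _, Obs.pop h htail⟩
    | cons b σ₁ =>
      simp only [List.cons_append, List.cons.injEq] at hστ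
      obtain ⟨rfl, h2⟩ := hστ
      obtain ⟨c', hc1, hc2⟩ := ih σ₁ τ h2
      exact ⟨c', Obs.pop h hc1, hc2⟩
  | popEmpty h htail ih =>
    intro σ τ hστ
    cases σ with
    | nil =>
      simp only [List.nil_append] at hστ
      subst hστ
      exact ⟨_, Obs.refl _, Obs.popEmpty h htail⟩
    | cons b σ₁ =>
      simp only [List.cons_append, List.cons.injEq] at hστ
      obtain ⟨rfl, h2⟩ := hστ
      obtain ⟨c', hc1, hc2⟩ := ih σ₁ τ h2
      exact ⟨c', Obs.popEmpty h hc1, hc2⟩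
  | int h htail ih =>
    intro σ τ hστ
    cases σ with
    | nil =>
      simp only [List.nil_append] at hστ
      subst hστ
      exact ⟨_, Obs.refl _, Obs.int h htail⟩
    | cons b σ₁ =>
      simp only [List.cons_append, List.cons.injEq] at hστ
      obtain ⟨rfl, h2⟩ := hστ
      obtain ⟨c', hc1, hc2⟩ := ih σ₁ τ h2
      exact ⟨c', Obs.int h hc1, hc2⟩
  | silent h _ ih =>
    intro σ τ hστ
    obtain ⟨c', hc1, hc2⟩ := ih σ τ hστ
    exact ⟨c', Obs.silent h hc1, hc2⟩

end VPTS

/-- `I` ioco-like conforms to `S` iff `otr(I) ∩ T = ∅` where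
`T = otr(S)ᶜ ∩ (otr(S)·L_U)`. -/
theorem ioco_iff_inter_empty {L : Type} {kind : L → VPKind} (LU : Set L)
    (S I : VPTS L kind) :
    VPTS.Ioco LU I S ↔ I.otr ∩ (S.otrᶜ ∩ S.otrConcat LU) = ∅ := by
  constructor
  · intro hioco
    ext w
    simp only [Set.mem_inter_iff, Set.mem_compl_iff, Set.mem_empty_iff_false, iff_false,
      not_and]
    rintro hwI hwS ⟨σ, hσS, ℓ, hℓLU, rfl⟩
    obtain ⟨q₀, hq₀, c, hobs⟩ := hwI
    obtain ⟨c', hobs1, hobs2⟩ := VPTS.obs_split hobs σ [ℓ] rfl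
    have hℓout : ℓ ∈ I.outSet LU (I.after (q₀, []) σ) :=
      ⟨hℓLU, c', hobs1, c, hobs2⟩
    obtain ⟨s₀, hs₀, _, d, hd, d', hd'⟩ := hioco σ hσS q₀ hq₀ ℓ hℓout
    exact hwS ⟨s₀, hs₀, d', VPTS.obs_trans hd hd'⟩
  · intro hempty σ hσS q₀ hq₀ ℓ hℓout
    obtain ⟨hℓLU, c, hc, c', hc'⟩ := hℓout
    have hwI : σ ++ [ℓ] ∈ I.otr := ⟨q₀, hq₀, c', VPTS.obs_trans hc hc'⟩
    by_cases hwS : σ ++ [ℓ] ∈ S.otr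
    · obtain ⟨s₀, hs₀, d, hobs⟩ := hwS
      obtain ⟨d', hd1, hd2⟩ := VPTS.obs_split hobs σ [ℓ] rfl
      exact ⟨s₀, hs₀, hℓLU, d', hd1, d, hd2⟩
    · exfalso
      have : σ ++ [ℓ] ∈ I.otr ∩ (S.otrᶜ ∩ S.otrConcat LU) :=
        ⟨hwI, hwS, σ, hσS, ℓ, hℓLU, rfl⟩
      rw [hempty] at this
      exact this
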